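/- Let $c \in \mathbb{R}^n$, $A \in \mathbb{R}^{m \times n}$, $b \in \mathbb{R}^m$, and let $X \subseteq \mathbb{R}^n$ be a nonempty finite set. Define $g(\lambda) = \min_{x \in X} \big( c^T x + \lambda^T(Ax - b) \big)$ for $\lambda \ge 0$. Then $\sup_{\lambda \ge 0} g(\lambda) = \inf \{ c^T x : A x \le b,\ x \in \mathrm{conv}(X) \}$, where $\mathrm{conv}(X)$ is the convex hull of $X$ (with the convention that both sides equal $+\infty$ when the right feasible set is empty, under a suitable feasibility assumption). -/

import Mathlib

open Pointwise

lemma aux_hull {n : ℕ} (L : (Fin n → ℝ) →ₗ[ℝ] ℝ) (r : ℝ) (s : Set (Fin n → ℝ))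
    (h : ∀ x ∈ s, r ≤ L x) : ∀ x ∈ convexHull ℝ s, r ≤ L x := by
  intro x hx
  exact convexHull_min h (convex_halfSpace_ge (LinearMap.isLinear L) r) hx

noncomputable def lagLin {n m : ℕ} (c : Fin n → ℝ) (A : Matrix (Fin m) (Fin n) ℝ) (lam : Fin m → ℝ) :
    (Fin n → ℝ) →ₗ[ℝ] ℝ where
  toFun x := ∑ i, c i * x i + ∑ j, lam j * A.mulVec x j
  map_add' x y := by
    simp [Matrix.mulVec_add, mul_add, Finset.sum_add_distrib]; ring
  map_smul' t x := by
    simp [Matrix.mulVec_smul, Finset.mul_sum, smul_eq_mul, mul_left_comm, mul_comm,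
      mul_assoc, ← Finset.mul_sum]; ring

lemma lagLin_apply {n m : ℕ} (c : Fin n → ℝ) (A : Matrix (Fin m) (Fin n) ℝ) (lam : Fin m → ℝ)
    (x : Fin n → ℝ) : lagLin c A lam x = ∑ i, c i * x i + ∑ j, lam j * A.mulVec x j := rfl

/-- Geoffrion's theorem: the Lagrangian dual of a linear program with finite
set `X` and relaxed constraints `Ax ≤ b` equals the value of the linear
program over the convex hull of `X`, assuming the latter is feasible. -/
theorem geoffrion_lagrangian_dual {n m : ℕ}
    (c : Fin n → ℝ) (A : Matrix (Fin m) (Fin n) ℝ) (b : Fin m → ℝ)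
    (X : Finset (Fin n → ℝ)) (hX : X.Nonempty)
    (g : (Fin m → ℝ) → ℝ)
    (hg : ∀ lam, g lam =
      X.inf' hX (fun x => ∑ i, c i * x i + ∑ j, lam j * (A.mulVec x j - b j)))
    (hfeas : ∃ x ∈ convexHull ℝ (X : Set (Fin n → ℝ)), ∀ j, A.mulVec x j ≤ b j) :
    sSup {r : ℝ | ∃ lam : Fin m → ℝ, (∀ j, 0 ≤ lam j) ∧ r = g lam} =
      sInf {r : ℝ | ∃ x ∈ convexHull ℝ (X : Set (Fin n → ℝ)),
        (∀ j, A.mulVec x j ≤ b j) ∧ r = ∑ i, c i * x i} := by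
  classical
  set P : Set (Fin n → ℝ) := convexHull ℝ (X : Set (Fin n → ℝ)) with hPdef
  set Pv : Set ℝ := {r : ℝ | ∃ x ∈ P, (∀ j, A.mulVec x j ≤ b j) ∧ r = ∑ i, c i * x i}
    with hPvdef
  set D : Set ℝ := {r : ℝ | ∃ lam : Fin m → ℝ, (∀ j, 0 ≤ lam j) ∧ r = g lam} with hDdef
  have hXP : (X : Set (Fin n → ℝ)) ⊆ P := subset_convexHull ℝ _
  have hPconv : Convex ℝ P := convex_convexHull ℝ _
  have hPcomp : IsCompact P := X.finite_toSet.isCompact_convexHull (𝕜 := ℝ)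
  obtain ⟨x0, hx0P, hx0f⟩ := hfeas
  -- weak duality core
  have hkey : ∀ (lam : Fin m → ℝ), ∀ x ∈ P,
      g lam ≤ ∑ i, c i * x i + ∑ j, lam j * (A.mulVec x j - b j) := by
    intro lam x hx
    have h1 : ∀ y ∈ (X : Set (Fin n → ℝ)),
        g lam + ∑ j, lam j * b j ≤ lagLin c A lam y := by
      intro y hy
      have h2 := Finset.inf'_le
        (fun x => ∑ i, c i * x i + ∑ j, lam j * (A.mulVec x j - b j)) hy
      rw [← hg lam] at h2
      simp only [lagLin_apply, mul_sub, Finset.sum_sub_distrib] at h2 ⊢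
      linarith
    have h2 := aux_hull (lagLin c A lam) _ _ h1 x hx
    simp only [lagLin_apply, mul_sub, Finset.sum_sub_distrib] at h2 ⊢
    linarith
  have hwd : ∀ lam : Fin m → ℝ, (∀ j, 0 ≤ lam j) → ∀ x ∈ P,
      (∀ j, A.mulVec x j ≤ b j) → g lam ≤ ∑ i, c i * x i := by
    intro lam hlam x hx hxf
    have h1 := hkey lam x hx
    have hterm : ∑ j, lam j * (A.mulVec x j - b j) ≤ 0 :=
      Finset.sum_nonpos fun j _ =>
        mul_nonpos_of_nonneg_of_nonpos (hlam j) (sub_nonpos.2 (hxf j))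
    linarith
  have hPvne : Pv.Nonempty := ⟨_, x0, hx0P, hx0f, rfl⟩
  have hPvbdd : BddBelow Pv := by
    refine ⟨g 0, ?_⟩
    rintro r ⟨x, hx, hxf, rfl⟩
    exact hwd 0 (fun j => le_rfl) x hx hxf
  set vstar : ℝ := sInf Pv with hvdef
  have hvle : ∀ lam : Fin m → ℝ, (∀ j, 0 ≤ lam j) → g lam ≤ vstar := by
    intro lam hlam
    refine le_csInf hPvne ?_
    rintro r ⟨x, hx, hxf, rfl⟩
    exact hwd lam hlam x hx hxf
  have hDne : D.Nonempty := ⟨g 0, 0, fun j => le_rfl, rfl⟩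
  have hDbdd : BddAbove D := by
    refine ⟨vstar, ?_⟩
    rintro r ⟨lam, hlam, rfl⟩
    exact hvle lam hlam
  refine le_antisymm ?_ ?_
  · refine csSup_le hDne ?_
    rintro r ⟨lam, hlam, rfl⟩
    exact hvle lam hlam
  · refine le_of_forall_sub_le ?_
    intro ε hε
    set f : (Fin n → ℝ) → (Fin m → ℝ) × ℝ :=
      fun x => (fun j => A.mulVec x j - b j, ∑ i, c i * x i) with hfdef
    set Q : Set ((Fin m → ℝ) × ℝ) := {p | (∀ j, 0 ≤ p.1 j) ∧ 0 ≤ p.2} with hQdef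
    set S : Set ((Fin m → ℝ) × ℝ) := f '' P + Q with hSdef
    have hmulVecCont : ∀ j, Continuous fun x : Fin n → ℝ => A.mulVec x j := by
      intro j
      simp only [Matrix.mulVec, dotProduct]
      exact continuous_finset_sum _ fun k _ => continuous_const.mul (continuous_apply k)
    have hfc : Continuous f := by
      refine Continuous.prodMk ?_ ?_
      · exact continuous_pi fun j => (hmulVecCont j).sub continuous_const
      · exact continuous_finset_sum _ fun i _ => continuous_const.mul (continuous_apply i)
    have hQclosed : IsClosed Q := by
      have hQeq : Q = {p : (Fin m → ℝ) × ℝ | ∀ j, 0 ≤ p.1 j} ∩ {p | 0 ≤ p.2} := rfl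
      rw [hQeq, Set.setOf_forall]
      exact IsClosed.inter
        (isClosed_iInter fun j =>
          isClosed_le continuous_const ((continuous_apply j).comp continuous_fst))
        (isClosed_le continuous_const continuous_snd)
    have hSclosed : IsClosed S := hQclosed.add_left_of_isCompact (hPcomp.image hfc)
    have hfPconv : Convex ℝ (f '' P) := by
      rintro _ ⟨x, hx, rfl⟩ _ ⟨y, hy, rfl⟩ s t hs ht hst
      refine ⟨s • x + t • y, hPconv hx hy hs ht hst, ?_⟩
      have hA : A.mulVec (s • x + t • y) = s • A.mulVec x + t • A.mulVec y := by
        simp [Matrix.mulVec_add, Matrix.mulVec_smul]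
      have hteq : t = 1 - s := by linarith
      simp only [hfdef, Prod.smul_mk, Prod.mk_add_mk, Prod.mk.injEq]
      constructor
      · funext j
        simp only [hA, Pi.add_apply, Pi.smul_apply, smul_eq_mul]
        rw [hteq]; ring
      · simp [mul_add, Finset.sum_add_distrib, Finset.mul_sum, mul_left_comm]
    have hQconv : Convex ℝ Q := by
      rintro p hp q hq s t hs ht hst
      constructor
      · intro j
        simp only [Prod.fst_add, Prod.smul_fst, Pi.add_apply, Pi.smul_apply, smul_eq_mul]
        exact add_nonneg (mul_nonneg hs (hp.1 j)) (mul_nonneg ht (hq.1 j))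
      · simp only [Prod.snd_add, Prod.smul_snd, smul_eq_mul]
        exact add_nonneg (mul_nonneg hs hp.2) (mul_nonneg ht hq.2)
    have hSconv : Convex ℝ S := hfPconv.add hQconv
    have hmemS : ∀ (u : Fin m → ℝ) (r : ℝ),
        (u, r) ∈ S ↔ ∃ x ∈ P, (∀ j, A.mulVec x j - b j ≤ u j) ∧ ∑ i, c i * x i ≤ r := by
      intro u r
      constructor
      · intro h
        rw [hSdef, Set.mem_add] at h
        obtain ⟨a, ⟨x, hx, rfl⟩, q, hq, hsum⟩ := h
        refine ⟨x, hx, ?_, ?_⟩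
        · intro j
          have h1 := congrArg Prod.fst hsum
          have h2 := congrArg (fun v : Fin m → ℝ => v j) h1
          simp only [hfdef, Prod.fst_add, Pi.add_apply] at h2
          have := hq.1 j
          linarith
        · have h1 := congrArg Prod.snd hsum
          simp only [hfdef, Prod.snd_add] at h1
          have := hq.2
          linarith
      · rintro ⟨x, hx, h1, h2⟩
        rw [hSdef, Set.mem_add]
        refine ⟨f x, ⟨x, hx, rfl⟩,
          ((fun j => u j - (A.mulVec x j - b j)), r - ∑ i, c i * x i),
          ⟨fun j => sub_nonneg.2 (h1 j), sub_nonneg.2 h2⟩, ?_⟩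
        simp only [hfdef, Prod.mk_add_mk, Prod.mk.injEq]
        constructor
        · funext j; simp only [Pi.add_apply]; ring
        · ring
    have hpnot : ((0 : Fin m → ℝ), vstar - ε) ∉ S := by
      rw [hmemS]
      rintro ⟨x, hx, h1, h2⟩
      have hxf : ∀ j, A.mulVec x j ≤ b j := by
        intro j
        have := h1 j
        simp only [Pi.zero_apply] at this
        linarith
      have hv : vstar ≤ ∑ i, c i * x i := csInf_le hPvbdd ⟨x, hx, hxf, rfl⟩
      linarith
    obtain ⟨φ, α, hφp, hφS⟩ := geometric_hahn_banach_point_closed hSconv hSclosed hpnot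
    set lam0 : Fin m → ℝ := fun j => φ ((Pi.single j 1 : Fin m → ℝ), (0 : ℝ)) with hlam0
    set μ : ℝ := φ ((0 : Fin m → ℝ), (1 : ℝ)) with hμdef
    have hφexp : ∀ (u : Fin m → ℝ) (r : ℝ), φ (u, r) = ∑ j, lam0 j * u j + μ * r := by
      intro u r
      have hdecomp : ((u, r) : (Fin m → ℝ) × ℝ) =
          (∑ j, u j • (((Pi.single j 1 : Fin m → ℝ), (0 : ℝ)) : (Fin m → ℝ) × ℝ))
            + r • (((0 : Fin m → ℝ), (1 : ℝ)) : (Fin m → ℝ) × ℝ) := by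
        refine Prod.ext ?_ ?_
        · simp only [Prod.fst_add, Prod.fst_sum, Prod.smul_fst, Prod.smul_mk]
          funext i
          simp [Pi.single_apply, Finset.sum_apply, Finset.sum_ite_eq]
        · simp [Prod.snd_sum]
      rw [hdecomp, map_add, map_sum, map_smul]
      simp only [smul_eq_mul, map_smul]
      rw [← hμdef]
      congr 1
      · refine Finset.sum_congr rfl fun j _ => ?_
        simp [hlam0, smul_eq_mul, mul_comm]
      · ring
    have hφSexp : ∀ (u : Fin m → ℝ) (r : ℝ), (u, r) ∈ S →
        α < ∑ j, lam0 j * u j + μ * r := by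
      intro u r h
      have := hφS (u, r) h
      rwa [hφexp] at this
    have hαgt : μ * (vstar - ε) < α := by
      have h := hφp
      rw [hφexp] at h
      simpa using h
    have hgen : ∀ y ∈ P, ∀ (w : Fin m → ℝ) (t : ℝ),
        (∀ j, A.mulVec y j - b j ≤ w j) → (∑ i, c i * y i ≤ t) →
        α < ∑ j, lam0 j * w j + μ * t := by
      intro y hy w t hw ht
      exact hφSexp w t ((hmemS w t).2 ⟨y, hy, hw, ht⟩)
    have hlam0nn : ∀ k, 0 ≤ lam0 k := by
      intro k
      by_contra hk
      push_neg at hk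
      set base : ℝ := ∑ j, lam0 j * (A.mulVec x0 j - b j) + μ * (∑ i, c i * x0 i)
        with hbase
      have hb : ∀ t : ℝ, 0 ≤ t → α < base + lam0 k * t := by
        intro t ht
        have h := hgen x0 hx0P
          (fun j => (A.mulVec x0 j - b j) + t * ((Pi.single k 1 : Fin m → ℝ) j))
          (∑ i, c i * x0 i)
          (fun j => by
            show A.mulVec x0 j - b j ≤ A.mulVec x0 j - b j + t * ((Pi.single k 1 : Fin m → ℝ) j)
            have h0 : (0 : ℝ) ≤ t * ((Pi.single k 1 : Fin m → ℝ) j) := by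
              refine mul_nonneg ht ?_
              rw [Pi.single_apply]
              split <;> norm_num
            linarith) le_rfl
        have heq : ∑ j, lam0 j * ((A.mulVec x0 j - b j) + t * ((Pi.single k 1 : Fin m → ℝ) j)) =
            (∑ j, lam0 j * (A.mulVec x0 j - b j)) + lam0 k * t := by
          simp only [mul_add, Finset.sum_add_distrib, Pi.single_apply, mul_ite, mul_one,
            mul_zero, Finset.sum_ite_eq', Finset.mem_univ, if_true]
        rw [heq] at h
        rw [hbase]
        linarith
      have h0 := hb 0 le_rfl
      simp only [mul_zero, add_zero] at h0
      have ht := hb ((α - base) / lam0 k)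
        (le_of_lt (div_pos_of_neg_of_neg (by linarith) hk))
      have hcanc : lam0 k * ((α - base) / lam0 k) = α - base := by
        field_simp
        exact mul_div_cancel_left₀ _ (ne_of_lt hk)
      rw [hcanc] at ht
      linarith
    have hμnn : 0 ≤ μ := by
      by_contra hk
      push_neg at hk
      set base : ℝ := ∑ j, lam0 j * (A.mulVec x0 j - b j) + μ * (∑ i, c i * x0 i)
        with hbase
      have hb : ∀ t : ℝ, 0 ≤ t → α < base + μ * t := by
        intro t ht
        have h := hgen x0 hx0P (fun j => A.mulVec x0 j - b j) ((∑ i, c i * x0 i) + t)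
          (fun j => le_rfl) (by linarith)
        rw [hbase]
        linarith [h]
      have h0 := hb 0 le_rfl
      simp only [mul_zero, add_zero] at h0
      have ht := hb ((α - base) / μ)
        (le_of_lt (div_pos_of_neg_of_neg (by linarith) hk))
      have hcanc : μ * ((α - base) / μ) = α - base := by
        field_simp
        exact mul_div_cancel_left₀ _ (ne_of_lt hk)
      rw [hcanc] at ht
      linarith
    have hμpos : 0 < μ := by
      rcases eq_or_lt_of_le hμnn with he | h
      · exfalso
        have h1 := hgen x0 hx0P 0 (∑ i, c i * x0 i)
          (fun j => by simpa using sub_nonpos.2 (hx0f j)) le_rfl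
        simp only [Pi.zero_apply, mul_zero, Finset.sum_const_zero, zero_add] at h1
        rw [← he] at h1 hαgt
        simp only [zero_mul] at h1 hαgt
        linarith
      · exact h
    set lam' : Fin m → ℝ := fun j => lam0 j / μ with hlam'def
    have hlam'nn : ∀ j, 0 ≤ lam' j := fun j => div_nonneg (hlam0nn j) hμnn
    have hglam : vstar - ε ≤ g lam' := by
      rw [hg]
      refine Finset.le_inf' hX _ ?_
      intro y hy
      have hyS : α < ∑ j, lam0 j * (A.mulVec y j - b j) + μ * (∑ i, c i * y i) :=
        hgen y (hXP hy) (fun j => A.mulVec y j - b j) (∑ i, c i * y i)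
          (fun j => le_rfl) le_rfl
      set T : ℝ := ∑ j, lam0 j * (A.mulVec y j - b j) with hT
      have hT' : ∑ j, lam' j * (A.mulVec y j - b j) = T / μ := by
        rw [hT, Finset.sum_div]
        refine Finset.sum_congr rfl fun j _ => ?_
        rw [hlam'def]
        ring
      rw [hT']
      have hTμ : T / μ * μ = T := div_mul_cancel₀ _ (ne_of_gt hμpos)
      nlinarith [hμpos, hyS, hαgt, hTμ]
    have hmem : g lam' ∈ D := ⟨lam', hlam'nn, rfl⟩
    exact le_trans hglam (le_csSup hDbdd hmem)
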